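/- arXiv:2001.09635 — 4 statements merged into one kernel-verified Lean document; each statement's English description precedes it below -/
import Mathlib

section
/- Let p be a prime number and let A be the free associative (noncommutative) algebra over ℤ/pℤ on two generators X and Y. Then X^p·Y^p − (X·Y)^p does not lie in [A,A], the additive subgroup of A generated by all commutators ab − ba with a, b ∈ A. (In other words, X^p·Y^p ≢ (XY)^p modulo [A,A].) -/
/-- The additive subgroup `[A,A]` of a ring `A` generated by all commutators `a*b - b*a`. -/
def commutatorAddSubgroup (A : Type*) [Ring A] : AddSubgroup A :=
  AddSubgroup.closure {x : A | ∃ a b : A, x = a * b - b * a}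

open MonoidAlgebra FreeMonoid List

/-- The target cyclic word: `p` zeros followed by `p` ones. -/
def Wrd (p : ℕ) : List (Fin 2) := List.replicate p 0 ++ List.replicate p 1

noncomputable def gfun (p : ℕ) : FreeMonoid (Fin 2) → ZMod p := fun u =>
  open scoped Classical in if (FreeMonoid.toList u).IsRotated (Wrd p) then 1 else 0

lemma gfun_comm (p : ℕ) (u v : FreeMonoid (Fin 2)) : gfun p (u * v) = gfun p (v * u) := by
  unfold gfun
  have key : (FreeMonoid.toList (u * v)).IsRotated (Wrd p) ↔
      (FreeMonoid.toList (v * u)).IsRotated (Wrd p) := by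
    rw [FreeMonoid.toList_mul, FreeMonoid.toList_mul]
    constructor
    · exact fun h => (List.isRotated_append).trans h
    · exact fun h => (List.isRotated_append).trans h
  simp only [key]

/-- The trace-like functional on the monoid algebra. -/
noncomputable def phi (p : ℕ) : MonoidAlgebra (ZMod p) (FreeMonoid (Fin 2)) →+ ZMod p :=
  (Finsupp.liftAddHom fun u => AddMonoidHom.mulRight (gfun p u)).comp
    (MonoidAlgebra.coeffAddEquiv (R := ZMod p) (M := FreeMonoid (Fin 2))).toAddMonoidHom

lemma phi_single (p : ℕ) (u : FreeMonoid (Fin 2)) (c : ZMod p) :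
    phi p (MonoidAlgebra.single u c) = c * gfun p u := by
  rw [phi]
  exact Finsupp.liftAddHom_apply_single (fun u => AddMonoidHom.mulRight (gfun p u)) u c

lemma phi_mul_comm (p : ℕ) (a b : MonoidAlgebra (ZMod p) (FreeMonoid (Fin 2))) :
    phi p (a * b) = phi p (b * a) := by
  induction a using MonoidAlgebra.induction_linear with
  | zero => simp
  | add f g hf hg => rw [add_mul, mul_add, map_add, map_add, hf, hg]
  | single u c =>
    induction b using MonoidAlgebra.induction_linear with
    | zero => simp
    | add f g hf hg => rw [add_mul, mul_add, map_add, map_add, hf, hg]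
    | single v d =>
      rw [MonoidAlgebra.single_mul_single, MonoidAlgebra.single_mul_single,
        phi_single, phi_single, gfun_comm]
      ring

/-- The alternating list `[0,1,0,1,...]` with `n` blocks. -/
def altL : ℕ → List (Fin 2)
  | 0 => []
  | n + 1 => 0 :: 1 :: altL n

lemma toList_of_pow (p : ℕ) (a : Fin 2) :
    FreeMonoid.toList ((FreeMonoid.of a) ^ p) = List.replicate p a := by
  induction p with
  | zero => rfl
  | succ n ih =>
    rw [pow_succ, FreeMonoid.toList_mul, ih, FreeMonoid.toList_of,
      List.replicate_succ' (n := n) (a := a)]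

lemma toList_alt (p : ℕ) :
    FreeMonoid.toList ((FreeMonoid.of (0 : Fin 2) * FreeMonoid.of 1) ^ p) = altL p := by
  induction p with
  | zero => rfl
  | succ n ih =>
    rw [pow_succ', FreeMonoid.toList_mul, ih, FreeMonoid.toList_mul,
      FreeMonoid.toList_of, FreeMonoid.toList_of]
    rfl

lemma chain_alt (p : ℕ) :
    List.Chain' Ne (altL p) ∧ List.Chain' Ne ((1 : Fin 2) :: altL p) := by
  induction p with
  | zero => exact ⟨List.isChain_nil, List.isChain_singleton _⟩
  | succ n ih =>
    refine ⟨?_, ?_⟩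
    · show List.IsChain Ne (0 :: 1 :: altL n)
      rw [List.isChain_cons_cons]
      exact ⟨by decide, ih.2⟩
    · show List.IsChain Ne (1 :: 0 :: 1 :: altL n)
      rw [List.isChain_cons_cons, List.isChain_cons_cons]
      exact ⟨by decide, by decide, ih.2⟩

lemma not_rotated (p : ℕ) (hp : 2 ≤ p) : ¬ (altL p).IsRotated (Wrd p) := by
  intro h
  obtain ⟨n, hn⟩ := h.symm
  -- (Wrd p).rotate n = altL p
  rw [← List.rotate_mod] at hn
  set m := n % (Wrd p).length with hm
  have hlen : (Wrd p).length = 2 * p := by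
    simp [Wrd, List.length_append, List.length_replicate]; ring
  have hmlt : m < 2 * p := by
    rw [hm, ← hlen]
    exact Nat.mod_lt _ (by rw [hlen]; omega)
  rw [List.rotate_eq_drop_append_take (by omega : m ≤ (Wrd p).length)] at hn
  have hinfix : [(0 : Fin 2), 0] <:+: altL p ∨ [(1 : Fin 2), 1] <:+: altL p := by
    rcases le_or_gt m p with hmp | hmp
    · -- drop m (Wrd p) = replicate (p - m) 0 ++ replicate p 1, contains [1,1]
      right
      rw [← hn]
      have h1 : [(1 : Fin 2), 1] <:+: List.replicate p 1 := by
        have : List.replicate p (1 : Fin 2) = [1, 1] ++ List.replicate (p - 2) 1 := by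
          rw [show [(1 : Fin 2), 1] = List.replicate 2 1 from rfl, ← List.replicate_add]
          congr 1; omega
        rw [this]; exact ⟨[], List.replicate (p - 2) 1, rfl⟩
      have h2 : List.replicate p (1 : Fin 2) <:+: (Wrd p).drop m := by
        have : (Wrd p).drop m = (List.replicate p (0 : Fin 2)).drop m ++ List.replicate p 1 := by
          unfold Wrd
          rw [List.drop_append_of_le_length (by simpa using hmp)]
        rw [this]
        exact ⟨(List.replicate p (0 : Fin 2)).drop m, [], by simp⟩
      exact h1.trans (h2.trans ⟨[], (Wrd p).take m, by simp⟩)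
    · -- take m (Wrd p) starts with replicate p 0, contains [0,0]
      left
      rw [← hn]
      have h1 : [(0 : Fin 2), 0] <:+: List.replicate p 0 := by
        have : List.replicate p (0 : Fin 2) = [0, 0] ++ List.replicate (p - 2) 0 := by
          rw [show [(0 : Fin 2), 0] = List.replicate 2 0 from rfl, ← List.replicate_add]
          congr 1; omega
        rw [this]; exact ⟨[], List.replicate (p - 2) 0, rfl⟩
      have h2 : List.replicate p (0 : Fin 2) <:+: (Wrd p).take m := by
        have : (Wrd p).take m = List.replicate p (0 : Fin 2) ++ (List.replicate p (1 : Fin 2)).take (m - p) := by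
          unfold Wrd
          rw [List.take_append, List.take_of_length_le (by simpa using hmp.le)]
          simp
        rw [this]
        exact ⟨[], (List.replicate p (1 : Fin 2)).take (m - p), rfl⟩
      exact h1.trans (h2.trans ⟨(Wrd p).drop m, [], by simp⟩)
  rcases hinfix with h | h
  · have := ((chain_alt p).1.infix h)
    rw [List.isChain_cons_cons] at this
    exact this.1 rfl
  · have := ((chain_alt p).1.infix h)
    rw [List.isChain_cons_cons] at this
    exact this.1 rfl

theorem stmt_0 (p : ℕ) (hp : p.Prime)
    (X Y : FreeAlgebra (ZMod p) (Fin 2))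
    (hX : X = FreeAlgebra.ι (ZMod p) 0) (hY : Y = FreeAlgebra.ι (ZMod p) 1) :
    X ^ p * Y ^ p - (X * Y) ^ p ∉ commutatorAddSubgroup (FreeAlgebra (ZMod p) (Fin 2)) := by
  haveI : Fact p.Prime := ⟨hp⟩
  intro hmem
  set e : FreeAlgebra (ZMod p) (Fin 2) ≃ₐ[ZMod p] MonoidAlgebra (ZMod p) (FreeMonoid (Fin 2)) :=
    FreeAlgebra.equivMonoidAlgebraFreeMonoid with he
  -- phi ∘ e vanishes on the commutator subgroup
  have hvanish : phi p (e (X ^ p * Y ^ p - (X * Y) ^ p)) = 0 := by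
    refine AddSubgroup.closure_induction
      (p := fun x _ => phi p (e x) = 0) ?_ ?_ ?_ ?_ hmem
    · rintro x ⟨a, b, rfl⟩
      rw [map_sub e, map_sub (phi p), map_mul e a b, map_mul e b a, phi_mul_comm, sub_self]
    · simp
    · intro x y hx hy hpx hpy
      rw [map_add, map_add, hpx, hpy, add_zero]
    · intro x hx hpx
      rw [map_neg, map_neg, hpx, neg_zero]
  have heX : e X = MonoidAlgebra.single (FreeMonoid.of 0) 1 := by
    rw [hX, he]
    show (FreeAlgebra.lift (ZMod p) fun x : Fin 2 =>
        (MonoidAlgebra.of (ZMod p) (FreeMonoid (Fin 2))) (FreeMonoid.of x))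
        (FreeAlgebra.ι (ZMod p) 0) = _
    rw [FreeAlgebra.lift_ι_apply]
    rfl
  have heY : e Y = MonoidAlgebra.single (FreeMonoid.of 1) 1 := by
    rw [hY, he]
    show (FreeAlgebra.lift (ZMod p) fun x : Fin 2 =>
        (MonoidAlgebra.of (ZMod p) (FreeMonoid (Fin 2))) (FreeMonoid.of x))
        (FreeAlgebra.ι (ZMod p) 1) = _
    rw [FreeAlgebra.lift_ι_apply]
    rfl
  have hcomp : e (X ^ p * Y ^ p - (X * Y) ^ p) =
      MonoidAlgebra.single ((FreeMonoid.of (0 : Fin 2)) ^ p * (FreeMonoid.of 1) ^ p) 1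
      - MonoidAlgebra.single ((FreeMonoid.of (0 : Fin 2) * FreeMonoid.of 1) ^ p) 1 := by
    rw [map_sub, map_mul, map_pow, map_pow, map_pow, map_mul, heX, heY,
      MonoidAlgebra.single_pow, MonoidAlgebra.single_pow, MonoidAlgebra.single_mul_single,
      MonoidAlgebra.single_mul_single, MonoidAlgebra.single_pow]
    simp
  rw [hcomp, map_sub, phi_single, phi_single, one_mul, one_mul] at hvanish
  have hg1 : gfun p ((FreeMonoid.of (0 : Fin 2)) ^ p * (FreeMonoid.of 1) ^ p) = 1 := by
    unfold gfun
    rw [if_pos]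
    rw [FreeMonoid.toList_mul, toList_of_pow, toList_of_pow]
    exact List.IsRotated.refl _
  have hg2 : gfun p ((FreeMonoid.of (0 : Fin 2) * FreeMonoid.of 1) ^ p) = 0 := by
    unfold gfun
    rw [if_neg]
    rw [toList_alt]
    exact not_rotated p hp.two_le
  rw [hg1, hg2, sub_zero] at hvanish
  exact one_ne_zero hvanish
end

section
/- Let p be a prime number and let A be the free associative (noncommutative) ring ℤ{X,Y} on two generators X and Y over ℤ. Then X^p·Y^p − (X·Y)^p does not lie in the additive subgroup pA + [A,A] of A generated by all elements pa with a ∈ A together with all commutators ab − ba with a, b ∈ A. -/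
/-- The additive subgroup `p·A + [A,A]` of a ring `A` generated by all `p • a` together
with all commutators `a*b - b*a`. -/
def pCommutatorAddSubgroup (p : ℕ) (A : Type*) [Ring A] : AddSubgroup A :=
  AddSubgroup.closure ({x : A | ∃ a : A, x = p • a} ∪ {x : A | ∃ a b : A, x = a * b - b * a})

open Polynomial Matrix

theorem stmt_1 (p : ℕ) (hp : p.Prime)
    (X Y : FreeAlgebra ℤ (Fin 2))
    (hX : X = FreeAlgebra.ι ℤ 0) (hY : Y = FreeAlgebra.ι ℤ 1) :
    X ^ p * Y ^ p - (X * Y) ^ p ∉ pCommutatorAddSubgroup p (FreeAlgebra ℤ (Fin 2)) := by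
  haveI : Fact p.Prime := ⟨hp⟩
  subst hX hY
  set R := Polynomial (ZMod p) with hR
  set t : R := Polynomial.X with ht
  set X₀ : Matrix (Fin 2) (Fin 2) R := !![1, 0; 0, 0] with hX₀
  set Y₀ : Matrix (Fin 2) (Fin 2) R := !![t, 1; t - t ^ 2, 1 - t] with hY₀
  set f : FreeAlgebra ℤ (Fin 2) →ₐ[ℤ] Matrix (Fin 2) (Fin 2) R :=
    FreeAlgebra.lift ℤ ![X₀, Y₀] with hf
  set φ : FreeAlgebra ℤ (Fin 2) →+ R :=
    (Matrix.traceAddMonoidHom (Fin 2) R).comp f.toAddMonoidHom with hφ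
  intro hmem
  -- φ kills the subgroup
  have hker : ∀ x ∈ pCommutatorAddSubgroup p (FreeAlgebra ℤ (Fin 2)), φ x = 0 := by
    intro x hx
    refine AddSubgroup.closure_induction ?_ (map_zero φ) ?_ ?_ hx
    · rintro z (⟨a, rfl⟩ | ⟨a, b, rfl⟩)
      · have h1 : φ (p • a) = p • φ a := map_nsmul φ p a
        rw [h1, nsmul_eq_mul]
        have : (p : R) = 0 := by
          have := (ZMod.charP p).cast_eq_zero
          exact CharP.cast_eq_zero R p
        rw [this, zero_mul]
      · have : φ (a * b - b * a) = trace (f a * f b) - trace (f b * f a) := by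
          simp [hφ, map_sub, _root_.map_mul, Matrix.traceAddMonoidHom]
        rw [this, Matrix.trace_mul_comm, sub_self]
    · intro a b _ _ ha hb; rw [map_add, ha, hb, add_zero]
    · intro a _ ha; rw [map_neg, ha, neg_zero]
  have h0 := hker _ hmem
  -- compute φ of the element
  obtain ⟨n, rfl⟩ : ∃ n, p = n + 1 := ⟨p - 1, (Nat.succ_pred_eq_of_pos hp.pos).symm⟩
  have hfX : f (FreeAlgebra.ι ℤ 0) = X₀ := by simp [hf]
  have hfY : f (FreeAlgebra.ι ℤ 1) = Y₀ := by simp [hf]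
  have hXid : IsIdempotentElem X₀ := by
    show X₀ * X₀ = X₀
    rw [hX₀]
    ext i j
    fin_cases i <;> fin_cases j <;> simp [Matrix.mul_apply, Fin.sum_univ_two]
  have hYid : IsIdempotentElem Y₀ := by
    show Y₀ * Y₀ = Y₀
    rw [hY₀]
    ext i j : 1
    fin_cases i <;> fin_cases j <;>
      simp [Matrix.mul_apply, Fin.sum_univ_two] <;> ring
  have hXY : X₀ * Y₀ = !![t, 1; 0, 0] := by
    rw [hX₀, hY₀]
    ext i j
    fin_cases i <;> fin_cases j <;> simp [Matrix.mul_apply, Fin.sum_univ_two]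
  have hpowXY : ∀ m : ℕ, (X₀ * Y₀) ^ (m + 1) = !![t ^ (m + 1), t ^ m; 0, 0] := by
    intro m
    induction m with
    | zero => simpa using hXY
    | succ k ih =>
      rw [pow_succ, ih, hXY]
      ext i j : 1
      fin_cases i <;> fin_cases j <;>
        simp [Matrix.mul_apply, Fin.sum_univ_two] <;> ring
  have hval : φ (FreeAlgebra.ι ℤ 0 ^ (n + 1) * FreeAlgebra.ι ℤ 1 ^ (n + 1)
      - (FreeAlgebra.ι ℤ 0 * FreeAlgebra.ι ℤ 1) ^ (n + 1)) = t - t ^ (n + 1) := by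
    have : f (FreeAlgebra.ι ℤ 0 ^ (n + 1) * FreeAlgebra.ι ℤ 1 ^ (n + 1)
        - (FreeAlgebra.ι ℤ 0 * FreeAlgebra.ι ℤ 1) ^ (n + 1))
        = X₀ ^ (n + 1) * Y₀ ^ (n + 1) - (X₀ * Y₀) ^ (n + 1) := by
      simp only [map_sub, _root_.map_mul, map_pow, hfX, hfY]
    have e1 : X₀ ^ (n + 1) = X₀ := hXid.pow_succ_eq n
    have e2 : Y₀ ^ (n + 1) = Y₀ := hYid.pow_succ_eq n
    show trace (f _) = _
    rw [this, e1, e2, hpowXY n, hXY, Matrix.trace_sub, Matrix.trace_fin_two_of,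
      Matrix.trace_fin_two_of]
    simp only [add_zero]
  rw [hval] at h0
  -- t - t^(n+1) ≠ 0
  have hn : 1 ≤ n := by
    have := hp.two_le; omega
  have h2 := congrArg (fun q : R => q.coeff (n + 1)) h0
  simp only [ht] at h2
  rw [Polynomial.coeff_sub, Polynomial.coeff_X, Polynomial.coeff_X_pow,
    if_neg (by omega), if_pos rfl, Polynomial.coeff_zero] at h2
  haveI : Nontrivial (ZMod (n + 1)) := by
    refine ZMod.nontrivial_iff.mpr ?_
    omega
  rw [zero_sub, neg_eq_zero] at h2
  exact one_ne_zero h2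
end

section
/- Let p be a prime number and let A be the free associative (noncommutative) ring ℤ{X,Y} on two generators X and Y over ℤ. Then there is no element α ∈ A such that α − XY ∈ [A,A] and α^p − X^p·Y^p ∈ pA + [A,A]. (This is the ghost-component obstruction underlying the nonexistence of a continuous surjective group homomorphism W(A) → HH₀(E(A)) compatible with the Verschiebung and the Teichmüller map.) -/
theorem stmt_10 (p : ℕ) (hp : p.Prime)
    (X Y : FreeAlgebra ℤ (Fin 2))
    (hX : X = FreeAlgebra.ι ℤ 0) (hY : Y = FreeAlgebra.ι ℤ 1) :
    ¬ ∃ α : FreeAlgebra ℤ (Fin 2),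
        α - X * Y ∈ commutatorAddSubgroup (FreeAlgebra ℤ (Fin 2)) ∧
        α ^ p - X ^ p * Y ^ p ∈ pCommutatorAddSubgroup p (FreeAlgebra ℤ (Fin 2)) := by
  haveI : Fact p.Prime := ⟨hp⟩
  subst hX hY
  rintro ⟨α, h1, h2⟩
  set x : Matrix (Fin 2) (Fin 2) (ZMod p) := Matrix.single 0 1 1 with hxdef
  set y : Matrix (Fin 2) (Fin 2) (ZMod p) := Matrix.single 1 0 1 with hydef
  set ρ : FreeAlgebra ℤ (Fin 2) →ₐ[ℤ] Matrix (Fin 2) (Fin 2) (ZMod p) :=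
    FreeAlgebra.lift ℤ (fun i : Fin 2 => if i = 0 then x else y) with hρdef
  have hρX : ρ (FreeAlgebra.ι ℤ (0 : Fin 2)) = x := by simp [hρdef]
  have hρY : ρ (FreeAlgebra.ι ℤ (1 : Fin 2)) = y := by simp [hρdef]
  -- the trace kills the commutator subgroup
  have key1 : ∀ z ∈ commutatorAddSubgroup (FreeAlgebra ℤ (Fin 2)),
      Matrix.trace (ρ z) = 0 := by
    intro z hz
    induction hz using AddSubgroup.closure_induction with
    | mem w hw =>
        obtain ⟨a, b, rfl⟩ := hw
        rw [map_sub, map_mul, map_mul, Matrix.trace_sub, Matrix.trace_mul_comm, sub_self]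
    | zero => simp
    | add a b _ _ ha hb => rw [map_add, Matrix.trace_add, ha, hb, add_zero]
    | neg a _ ha => rw [map_neg, Matrix.trace_neg, ha, neg_zero]
  -- the trace kills p·A + [A,A]
  have key2 : ∀ z ∈ pCommutatorAddSubgroup p (FreeAlgebra ℤ (Fin 2)),
      Matrix.trace (ρ z) = 0 := by
    intro z hz
    induction hz using AddSubgroup.closure_induction with
    | mem w hw =>
        rcases hw with h | h
        · obtain ⟨a, rfl⟩ := h
          rw [map_nsmul, Matrix.trace_smul, nsmul_eq_mul]
          simp
        · obtain ⟨a, b, rfl⟩ := h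
          rw [map_sub, map_mul, map_mul, Matrix.trace_sub, Matrix.trace_mul_comm, sub_self]
    | zero => simp
    | add a b _ _ ha hb => rw [map_add, Matrix.trace_add, ha, hb, add_zero]
    | neg a _ ha => rw [map_neg, Matrix.trace_neg, ha, neg_zero]
  -- trace of ρ α is 1
  have hxy : x * y = Matrix.single (0 : Fin 2) 0 1 := by
    rw [hxdef, hydef, Matrix.single_mul_single_same, one_mul]
  have htrα : Matrix.trace (ρ α) = 1 := by
    have := key1 _ h1
    rw [map_sub, map_mul, hρX, hρY, Matrix.trace_sub, sub_eq_zero] at this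
    rw [this, hxy, Matrix.trace_single_eq_same]
  -- trace of ρ (α ^ p) is 1
  have htrαp : Matrix.trace ((ρ α) ^ p) = 1 := by
    rw [ZMod.trace_pow_card, htrα, one_pow]
  -- x ^ p = 0
  have hx2 : x * x = 0 := by
    rw [hxdef]
    exact Matrix.single_mul_single_of_ne (i := 0) (j := 1) (k := 0) (h := by decide) (c := (1 : ZMod p)) (d := 1)
  have hxp : x ^ p = 0 := by
    have h2le := hp.two_le
    have : x ^ p = x * x * x ^ (p - 2) := by
      rw [← pow_two, ← pow_add]
      congr 1
      omega
    rw [this, hx2, zero_mul]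
  -- contradiction
  have hfin := key2 _ h2
  simp only [map_sub, map_mul, map_pow, hρX, hρY, hxp, zero_mul, Matrix.trace_sub,
    Matrix.trace_zero, htrαp, sub_zero] at hfin
  exact one_ne_zero hfin
end

section
/- Let p be a prime number and let A be the free associative (noncommutative) ring ℤ{X,Y} on two generators X and Y over ℤ. Then there is no sequence (α₀, α₁, α₂, …) of elements of A such that for every natural number n, the ghost component ω_n(α₀,…,α_n) = α₀^{p^n} + p·α₁^{p^{n−1}} + p²·α₂^{p^{n−2}} + ⋯ + pⁿ·α_n is congruent to X^{p^n}·Y^{p^n} modulo [A,A]. (Already the conditions for n = 0 and n = 1 are contradictory.) -/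
/-- The `n`-th ghost (Witt) polynomial evaluated on a sequence:
`ω_n(a₀,…,a_n) = ∑_{i=0}^{n} pⁱ · aᵢ^{p^{n-i}}`. -/
def ghostComponent (p : ℕ) {A : Type*} [Ring A] (a : ℕ → A) (n : ℕ) : A :=
  ∑ i ∈ Finset.range (n + 1), (p : A) ^ i * (a i) ^ (p ^ (n - i))

theorem stmt_11 (p : ℕ) (hp : p.Prime)
    (X Y : FreeAlgebra ℤ (Fin 2))
    (hX : X = FreeAlgebra.ι ℤ 0) (hY : Y = FreeAlgebra.ι ℤ 1) :
    ¬ ∃ α : ℕ → FreeAlgebra ℤ (Fin 2),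
        ∀ n : ℕ,
          ghostComponent p α n - X ^ (p ^ n) * Y ^ (p ^ n) ∈
            commutatorAddSubgroup (FreeAlgebra ℤ (Fin 2)) := by
  haveI : Fact p.Prime := ⟨hp⟩
  rintro ⟨α, hα⟩
  -- map to 2×2 matrices over ZMod p
  set E : Fin 2 → Matrix (Fin 2) (Fin 2) (ZMod p) :=
    ![Matrix.single 0 1 1, Matrix.single 1 0 1] with hE
  let f : FreeAlgebra ℤ (Fin 2) →ₐ[ℤ] Matrix (Fin 2) (Fin 2) (ZMod p) :=
    FreeAlgebra.lift ℤ E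
  -- trace ∘ f kills commutators
  have hker : ∀ x ∈ commutatorAddSubgroup (FreeAlgebra ℤ (Fin 2)),
      Matrix.trace (f x) = 0 := by
    intro x hx
    induction hx using AddSubgroup.closure_induction with
    | mem x hx =>
        obtain ⟨a, b, rfl⟩ := hx
        rw [map_sub, map_mul, map_mul, Matrix.trace_sub, Matrix.trace_mul_comm, sub_self]
    | zero => simp
    | add x y _ _ h1 h2 => simp [map_add, Matrix.trace_add, h1, h2]
    | neg x _ h1 => simp [map_neg, Matrix.trace_neg, h1]
  have hfX : f X = Matrix.single 0 1 1 := by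
    rw [hX]; simp [f, hE]
  have hfY : f Y = Matrix.single 1 0 1 := by
    rw [hY]; simp [f, hE]
  have htrXY : Matrix.trace (f X * f Y) = 1 := by
    rw [hfX, hfY, Matrix.single_mul_single_same]
    simp [Matrix.trace_single_eq_same]
  -- n = 0 : trace (f (α 0)) = 1
  have h0 := hker _ (hα 0)
  have hg0 : ghostComponent p α 0 = α 0 := by
    simp [ghostComponent]
  rw [hg0, pow_zero, pow_one, pow_one, map_sub, Matrix.trace_sub, map_mul] at h0
  rw [sub_eq_zero] at h0
  have htr0 : Matrix.trace (f (α 0)) = 1 := by rw [h0, htrXY]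
  -- n = 1
  have h1 := hker _ (hα 1)
  have hg1 : ghostComponent p α 1 = (α 0) ^ p + (p : FreeAlgebra ℤ (Fin 2)) * α 1 := by
    simp [ghostComponent, Finset.sum_range_succ]
  have hfXp : (f X) ^ p = 0 := by
    have h2 : (f X) ^ 2 = 0 := by
      have hz : Matrix.single (0 : Fin 2) (1 : Fin 2) (1 : ZMod p) *
          Matrix.single (0 : Fin 2) (1 : Fin 2) (1 : ZMod p) = 0 :=
        Matrix.single_mul_single_of_ne _ _ _ _ (by decide) _
      rw [hfX, sq, hz]
    calc (f X) ^ p = (f X) ^ 2 * (f X) ^ (p - 2) := by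
          rw [← pow_add]; congr 1; have := hp.two_le; omega
      _ = 0 := by rw [h2, zero_mul]
  have hpz : ((p : ℕ) : Matrix (Fin 2) (Fin 2) (ZMod p)) = 0 := by
    have : ((p : ℕ) : ZMod p) = 0 := ZMod.natCast_self p
    simp [← Matrix.scalar_apply]
  rw [hg1, pow_one, map_sub, map_add, map_mul, map_mul, map_pow, map_pow, map_pow,
    map_natCast, hpz, zero_mul, add_zero, hfXp, zero_mul, Matrix.trace_sub,
    Matrix.trace_zero, sub_zero, ZMod.trace_pow_card, htr0, one_pow] at h1
  exact one_ne_zero h1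
end
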